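/- For a, h > 0, let d satisfy cosh(d/2) = cosh a · cosh h, and let α, β ∈ (0, π/2) satisfy sin β = sinh a / sinh(d/2) and cos(α + β) = tanh h. Then sin α = tanh h · (cosh a − sinh a) / sinh(d/2) and cos α = (cosh a · sinh² h + sinh a)/(cosh h · sinh(d/2)). -/

import Mathlib

open Real

lemma sq_eq_of_pos {x y : ℝ} (hx : 0 < x) (hy : 0 ≤ y) (h : x ^ 2 = y ^ 2) : x = y := by
  have h0 : (x - y) * (x + y) = 0 := by linear_combination h
  rcases mul_eq_zero.1 h0 with h1 | h1 <;> linarith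

set_option maxHeartbeats 1000000 in
theorem stmt13 (a h d α β : ℝ) (ha : 0 < a) (hh : 0 < h)
    (hd : cosh (d / 2) = cosh a * cosh h)
    (hα : α ∈ Set.Ioo 0 (π / 2)) (hβ : β ∈ Set.Ioo 0 (π / 2))
    (hsβ : sin β = sinh a / sinh (d / 2))
    (hab : cos (α + β) = tanh h) :
    sin α = tanh h * (cosh a - sinh a) / sinh (d / 2) ∧
    cos α = (cosh a * sinh h ^ 2 + sinh a) / (cosh h * sinh (d / 2)) := by
  obtain ⟨hα0, hα1⟩ := hα
  obtain ⟨hβ0, hβ1⟩ := hβ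
  have hpi := Real.pi_pos
  have hsa : 0 < sinh a := Real.sinh_pos_iff.2 ha
  have hsh : 0 < sinh h := Real.sinh_pos_iff.2 hh
  have hch : 0 < cosh h := Real.cosh_pos h
  have hca : 0 < cosh a := Real.cosh_pos a
  have hsβpos : 0 < sin β := Real.sin_pos_of_pos_of_lt_pi hβ0 (by linarith)
  have hS : 0 < sinh (d / 2) := by
    rcases div_pos_iff.1 (hsβ ▸ hsβpos) with ⟨_, h2⟩ | ⟨h1, _⟩
    · exact h2
    · linarith
  have hS2 : sinh (d / 2) ^ 2 = cosh a ^ 2 * cosh h ^ 2 - 1 := by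
    have h2 : (cosh a * cosh h) ^ 2 = sinh (d / 2) ^ 2 + 1 := by
      rw [← hd]; exact Real.cosh_sq _
    nlinarith [h2]
  have hcβpos : 0 < cos β := Real.cos_pos_of_mem_Ioo ⟨by linarith, hβ1⟩
  have hcβ : cos β = cosh a * sinh h / sinh (d / 2) := by
    have hsq : cos β ^ 2 = (cosh a * sinh h / sinh (d / 2)) ^ 2 := by
      have hp := Real.sin_sq_add_cos_sq β
      rw [hsβ] at hp
      field_simp at hp ⊢
      nlinarith [hp, hS2, Real.cosh_sq a, Real.cosh_sq h]
    have hR : 0 ≤ cosh a * sinh h / sinh (d / 2) := by positivity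
    exact sq_eq_of_pos hcβpos hR hsq
  have hsab : sin (α + β) = 1 / cosh h := by
    have hpos : 0 < sin (α + β) :=
      Real.sin_pos_of_pos_of_lt_pi (by linarith) (by linarith)
    have hsq : sin (α + β) ^ 2 = (1 / cosh h) ^ 2 := by
      have hp := Real.sin_sq_add_cos_sq (α + β)
      rw [hab, Real.tanh_eq_sinh_div_cosh] at hp
      have hcs := Real.cosh_sq_sub_sinh_sq h
      field_simp at hp ⊢
      linarith [hp, hcs]
    have hR : (0:ℝ) ≤ 1 / cosh h := by positivity
    exact sq_eq_of_pos hpos hR hsq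
  have hsinα : sin α = sin ((α + β) - β) := by ring_nf
  have hcosα : cos α = cos ((α + β) - β) := by ring_nf
  rw [Real.sin_sub] at hsinα
  rw [Real.cos_sub] at hcosα
  rw [hsab, hab, hcβ, hsβ, Real.tanh_eq_sinh_div_cosh] at hsinα hcosα
  constructor
  · rw [hsinα, Real.tanh_eq_sinh_div_cosh]
    field_simp
  · rw [hcosα]
    field_simp
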